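/- Let (X,d) be a proper Polish metric space, p ≥ 1, and let G be a topological group acting on X by isometries such that the action is continuous and proper. Suppose the p-th Wasserstein space over X is geodesic, i.e. any two measures in P_p(X) with W_p(μ,ν) ≠ 0 are joined by a constant-speed W_p-geodesic. Then the shape space is geodesic: for all μ, ν ∈ P_p(X) with D_p(μ,ν) ≠ 0 there exists a curve (μ_t)_{t ∈ [0,1]} in P_p(X) with μ_0 = μ, μ_1 equivalent to ν (∃ g ∈ G, g_#μ_1 = ν), and D_p(μ_s, μ_t) = |s − t| · D_p(μ, ν) for all s, t ∈ [0,1]. -/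

import Mathlib

open MeasureTheory ENNReal Set

noncomputable section

/-- The set of admissible couplings of two measures. -/
def Adm {X : Type*} [MeasurableSpace X] (μ ν : Measure X) : Set (Measure (X × X)) :=
  {π | IsProbabilityMeasure π ∧ π.map Prod.fst = μ ∧ π.map Prod.snd = ν}

/-- The `p`-th Wasserstein distance. -/
def Wp {X : Type*} [MeasurableSpace X] [PseudoEMetricSpace X] (p : ℝ) (μ ν : Measure X) :
    ℝ≥0∞ :=
  (⨅ π ∈ Adm μ ν, ∫⁻ z : X × X, edist z.1 z.2 ^ p ∂π) ^ (1 / p)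

/-- Finite `p`-th moment. -/
def HasFinitePMoment {X : Type*} [MeasurableSpace X] [PseudoEMetricSpace X] (p : ℝ)
    (μ : Measure X) : Prop :=
  ∃ x₀ : X, ∫⁻ x, edist x x₀ ^ p ∂μ ≠ ⊤

/-- Shape distance `D_p(μ,ν) := inf_{g ∈ G} W_p(g_#μ, ν)` for a group action. -/
def DpAct {X : Type*} (G : Type*) [Group G] [MulAction G X] [MeasurableSpace X]
    [MetricSpace X] (p : ℝ) (μ ν : Measure X) : ℝ≥0∞ :=
  ⨅ g : G, Wp p (μ.map (fun x : X => g • x)) ν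

open ProbabilityTheory Filter Topology

set_option linter.unusedSectionVars false
set_option maxHeartbeats 1000000

section Basic

variable {X : Type*} [MeasurableSpace X] [MetricSpace X] [BorelSpace X]
  [SecondCountableTopology X] {p : ℝ}

lemma hp0 (hp : 1 ≤ p) : 0 < p := lt_of_lt_of_le one_pos hp

lemma measurable_ecost : Measurable fun z : X × X => edist z.1 z.2 ^ p :=
  (measurable_fst.edist measurable_snd).pow measurable_const

/-- `Wp` as an infimum of `(cost)^(1/p)`. -/
lemma wp_eq_iInf (hp : 1 ≤ p) (μ ν : Measure X) :
    Wp p μ ν = ⨅ π ∈ Adm μ ν, (∫⁻ z : X × X, edist z.1 z.2 ^ p ∂π) ^ (1 / p) := by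
  have h1p : (0:ℝ) < 1 / p := div_pos one_pos (hp0 hp)
  set e := ENNReal.orderIsoRpow (1/p) h1p with he
  have hee : ∀ x : ℝ≥0∞, e x = x ^ (1/p) := fun _ => rfl
  calc Wp p μ ν = e (⨅ π ∈ Adm μ ν, ∫⁻ z : X × X, edist z.1 z.2 ^ p ∂π) := rfl
    _ = ⨅ π : Measure (X × X), e (⨅ _ : π ∈ Adm μ ν, ∫⁻ z : X × X, edist z.1 z.2 ^ p ∂π) :=
        e.map_iInf _
    _ = ⨅ π ∈ Adm μ ν, (∫⁻ z : X × X, edist z.1 z.2 ^ p ∂π) ^ (1 / p) := by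
        refine iInf_congr fun π => ?_
        rw [e.map_iInf]
        exact iInf_congr fun hπ => hee _

lemma wp_le_of_mem (hp : 1 ≤ p) {μ ν : Measure X} {π : Measure (X × X)} (hπ : π ∈ Adm μ ν) :
    Wp p μ ν ≤ (∫⁻ z : X × X, edist z.1 z.2 ^ p ∂π) ^ (1 / p) := by
  rw [wp_eq_iInf hp]; exact iInf₂_le π hπ

lemma le_wp (hp : 1 ≤ p) {μ ν : Measure X} {a : ℝ≥0∞}
    (h : ∀ π ∈ Adm μ ν, a ≤ (∫⁻ z : X × X, edist z.1 z.2 ^ p ∂π) ^ (1 / p)) :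
    a ≤ Wp p μ ν := by
  rw [wp_eq_iInf hp]; exact le_iInf₂ h

lemma exists_coupling_lt (hp : 1 ≤ p) {μ ν : Measure X} {c : ℝ≥0∞} (h : Wp p μ ν < c) :
    ∃ π ∈ Adm μ ν, (∫⁻ z : X × X, edist z.1 z.2 ^ p ∂π) ^ (1 / p) < c := by
  rw [wp_eq_iInf hp] at h
  simpa using (iInf_lt_iff.mp h).imp fun π hπ => iInf_lt_iff.mp hπ

lemma adm_prod (μ ν : Measure X) [IsProbabilityMeasure μ] [IsProbabilityMeasure ν] :
    μ.prod ν ∈ Adm μ ν := by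
  refine ⟨by infer_instance, ?_, ?_⟩
  · rw [Measure.map_fst_prod]; simp
  · rw [Measure.map_snd_prod]; simp

lemma wp_self (hp : 1 ≤ p) {μ : Measure X} (hμ : IsProbabilityMeasure μ) :
    Wp p μ μ = 0 := by
  have hd : Measurable fun x : X => (x, x) := measurable_id.prodMk measurable_id
  haveI := hμ
  have hπ : μ.map (fun x => (x, x)) ∈ Adm μ μ := by
    refine ⟨Measure.isProbabilityMeasure_map hd.aemeasurable, ?_, ?_⟩ <;>
      · rw [Measure.map_map (by measurability) hd]
        simp [Function.comp_def]
  have hc : ∫⁻ z : X × X, edist z.1 z.2 ^ p ∂(μ.map (fun x => (x, x))) = 0 := by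
    rw [lintegral_map measurable_ecost hd]
    simp [ENNReal.zero_rpow_of_pos (hp0 hp)]
  have := wp_le_of_mem hp hπ
  rw [hc, ENNReal.zero_rpow_of_pos (div_pos one_pos (hp0 hp))] at this
  exact le_antisymm this zero_le

lemma adm_map {μ ν : Measure X} {π : Measure (X × X)} (hπ : π ∈ Adm μ ν)
    {T S : X → X} (hT : Measurable T) (hS : Measurable S) :
    π.map (fun z : X × X => (T z.1, S z.2)) ∈ Adm (μ.map T) (ν.map S) := by
  obtain ⟨hprob, h1, h2⟩ := hπ
  haveI := hprob
  have hm : Measurable fun z : X × X => (T z.1, S z.2) :=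
    (hT.comp measurable_fst).prodMk (hS.comp measurable_snd)
  refine ⟨Measure.isProbabilityMeasure_map hm.aemeasurable, ?_, ?_⟩
  · rw [Measure.map_map measurable_fst hm, show (Prod.fst ∘ fun z : X × X => (T z.1, S z.2))
      = T ∘ Prod.fst from rfl, ← Measure.map_map hT measurable_fst, h1]
  · rw [Measure.map_map measurable_snd hm, show (Prod.snd ∘ fun z : X × X => (T z.1, S z.2))
      = S ∘ Prod.snd from rfl, ← Measure.map_map hS measurable_snd, h2]

lemma wp_map_map_le (hp : 1 ≤ p) {μ ν : Measure X} {φ : X → X} (hφm : Measurable φ)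
    (hφ : ∀ x y, edist (φ x) (φ y) = edist x y) :
    Wp p (μ.map φ) (ν.map φ) ≤ Wp p μ ν := by
  rw [wp_eq_iInf hp μ ν]
  refine le_iInf₂ fun π hπ => ?_
  refine (wp_le_of_mem hp (adm_map hπ hφm hφm)).trans_eq ?_
  congr 1
  have hm : Measurable fun z : X × X => (φ z.1, φ z.2) :=
    (hφm.comp measurable_fst).prodMk (hφm.comp measurable_snd)
  rw [lintegral_map measurable_ecost hm]
  simp [hφ]

lemma wp_symm_le (hp : 1 ≤ p) (μ ν : Measure X) : Wp p ν μ ≤ Wp p μ ν := by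
  rw [wp_eq_iInf hp μ ν]
  refine le_iInf₂ fun π hπ => ?_
  obtain ⟨hprob, h1, h2⟩ := hπ
  haveI := hprob
  have hswap : π.map Prod.swap ∈ Adm ν μ := by
    refine ⟨Measure.isProbabilityMeasure_map measurable_swap.aemeasurable, ?_, ?_⟩
    · rw [Measure.map_map measurable_fst measurable_swap]; exact h2
    · rw [Measure.map_map measurable_snd measurable_swap]; exact h1
  refine (wp_le_of_mem hp hswap).trans_eq ?_
  congr 1
  rw [lintegral_map measurable_ecost measurable_swap]
  simp [edist_comm]

lemma wp_symm (hp : 1 ≤ p) (μ ν : Measure X) : Wp p μ ν = Wp p ν μ :=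
  le_antisymm (wp_symm_le hp ν μ) (wp_symm_le hp μ ν)

lemma two_bound (hp : 1 ≤ p) (a b : ℝ≥0∞) : (a + b) ^ p ≤ 2 ^ p * (a ^ p + b ^ p) := by
  have h1 : a + b ≤ 2 * max a b := by
    rw [two_mul]; exact add_le_add (le_max_left a b) (le_max_right a b)
  calc (a + b) ^ p ≤ (2 * max a b) ^ p := ENNReal.rpow_le_rpow h1 (hp0 hp).le
    _ = 2 ^ p * (max a b) ^ p := ENNReal.mul_rpow_of_nonneg _ _ (hp0 hp).le
    _ ≤ 2 ^ p * (a ^ p + b ^ p) := by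
        gcongr
        rcases le_total a b with h | h
        · rw [max_eq_right h]; exact le_add_self
        · rw [max_eq_left h]; exact le_add_right le_rfl

lemma measurable_edist_pow {y : X} : Measurable fun x : X => edist x y ^ p :=
  ((measurable_edist.comp (measurable_id.prodMk measurable_const)).pow measurable_const)

lemma measurable_edist_pow' {y : X} : Measurable fun x : X => edist y x ^ p :=
  ((measurable_edist.comp (measurable_const.prodMk measurable_id)).pow measurable_const)

lemma moment_everywhere (hp : 1 ≤ p) {μ : Measure X} [IsProbabilityMeasure μ]
    (h : HasFinitePMoment p μ) (y : X) : ∫⁻ x, edist x y ^ p ∂μ ≠ ⊤ := by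
  obtain ⟨x₀, hx₀⟩ := h
  have hb : ∀ x : X, edist x y ^ p ≤ 2 ^ p * (edist x x₀ ^ p + edist x₀ y ^ p) := fun x =>
    (ENNReal.rpow_le_rpow (edist_triangle x x₀ y) (hp0 hp).le).trans (two_bound hp _ _)
  have hm1 : Measurable fun x : X => edist x x₀ ^ p + edist x₀ y ^ p :=
    measurable_edist_pow.add measurable_const
  have hint : ∫⁻ x, edist x y ^ p ∂μ
      ≤ 2 ^ p * (∫⁻ x, edist x x₀ ^ p ∂μ + edist x₀ y ^ p) := by
    calc ∫⁻ x, edist x y ^ p ∂μ ≤ ∫⁻ x, 2 ^ p * (edist x x₀ ^ p + edist x₀ y ^ p) ∂μ :=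
          lintegral_mono hb
      _ = 2 ^ p * (∫⁻ x, edist x x₀ ^ p ∂μ + edist x₀ y ^ p) := by
          rw [lintegral_const_mul _ hm1, lintegral_add_right _ measurable_const,
            lintegral_const, measure_univ, mul_one]
  refine ne_top_of_le_ne_top ?_ hint
  have h2 : (2 : ℝ≥0∞) ^ p ≠ ⊤ := ENNReal.rpow_ne_top_of_nonneg (hp0 hp).le (by norm_num)
  have h3 : edist x₀ y ^ p ≠ ⊤ := ENNReal.rpow_ne_top_of_nonneg (hp0 hp).le (edist_ne_top _ _)
  exact ENNReal.mul_ne_top h2 (by simp [hx₀, h3, ENNReal.add_ne_top])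

lemma moment_map {μ : Measure X} {φ : X → X} (hφm : Measurable φ)
    (hφ : ∀ x y, edist (φ x) (φ y) = edist x y)
    (h : HasFinitePMoment p μ) : HasFinitePMoment p (μ.map φ) := by
  obtain ⟨x₀, hx₀⟩ := h
  refine ⟨φ x₀, ?_⟩
  rw [lintegral_map measurable_edist_pow hφm]
  simpa [hφ] using hx₀

lemma wp_ne_top (hp : 1 ≤ p) {μ ν : Measure X} [IsProbabilityMeasure μ] [IsProbabilityMeasure ν]
    (hμ : HasFinitePMoment p μ) (hν : HasFinitePMoment p ν) : Wp p μ ν ≠ ⊤ := by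
  obtain ⟨x₀, hx₀⟩ := hμ
  have hcost : ∫⁻ z : X × X, edist z.1 z.2 ^ p ∂(μ.prod ν) ≠ ⊤ := by
    have hb : ∀ z : X × X, edist z.1 z.2 ^ p
        ≤ 2 ^ p * (edist z.1 x₀ ^ p + edist x₀ z.2 ^ p) := fun z =>
      (ENNReal.rpow_le_rpow (edist_triangle z.1 x₀ z.2) (hp0 hp).le).trans (two_bound hp _ _)
    have hmf : Measurable fun x : X => edist x x₀ ^ p := measurable_edist_pow
    have hmg : Measurable fun y : X => edist x₀ y ^ p := measurable_edist_pow'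
    have h1 : ∫⁻ z : X × X, edist z.1 x₀ ^ p ∂(μ.prod ν) = ∫⁻ x, edist x x₀ ^ p ∂μ := by
      rw [← lintegral_map hmf measurable_fst, Measure.map_fst_prod, measure_univ, one_smul]
    have h2 : ∫⁻ z : X × X, edist x₀ z.2 ^ p ∂(μ.prod ν) = ∫⁻ y, edist x₀ y ^ p ∂ν := by
      rw [← lintegral_map hmg measurable_snd, Measure.map_snd_prod, measure_univ, one_smul]
    have hν' : ∫⁻ y, edist x₀ y ^ p ∂ν ≠ ⊤ := by
      have := moment_everywhere hp hν x₀
      rw [show (fun y : X => edist x₀ y ^ p) = fun y : X => edist y x₀ ^ p by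
        funext y; rw [edist_comm]]
      exact this
    have hm2 : Measurable fun z : X × X => edist z.1 x₀ ^ p + edist x₀ z.2 ^ p :=
      (hmf.comp measurable_fst).add (hmg.comp measurable_snd)
    have hint : ∫⁻ z : X × X, edist z.1 z.2 ^ p ∂(μ.prod ν)
        ≤ 2 ^ p * (∫⁻ x, edist x x₀ ^ p ∂μ + ∫⁻ y, edist x₀ y ^ p ∂ν) := by
      calc ∫⁻ z : X × X, edist z.1 z.2 ^ p ∂(μ.prod ν)
          ≤ ∫⁻ z : X × X, 2 ^ p * (edist z.1 x₀ ^ p + edist x₀ z.2 ^ p) ∂(μ.prod ν) :=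
            lintegral_mono hb
        _ = 2 ^ p * (∫⁻ x, edist x x₀ ^ p ∂μ + ∫⁻ y, edist x₀ y ^ p ∂ν) := by
            have hmfc : Measurable fun z : X × X => edist z.1 x₀ ^ p := hmf.comp measurable_fst
            rw [lintegral_const_mul _ hm2, lintegral_add_left hmfc, h1, h2]
    refine ne_top_of_le_ne_top ?_ hint
    exact ENNReal.mul_ne_top (ENNReal.rpow_ne_top_of_nonneg (hp0 hp).le (by norm_num))
      (by simp [hx₀, hν', ENNReal.add_ne_top])
  have hle := wp_le_of_mem hp (adm_prod μ ν)
  refine ne_top_of_le_ne_top ?_ hle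
  exact ENNReal.rpow_ne_top_of_nonneg (by positivity) hcost

end Basic

section Tri
variable {X : Type*} [MeasurableSpace X] [MetricSpace X] [BorelSpace X]
  [SecondCountableTopology X] [CompleteSpace X] {p : ℝ}

lemma glue (hp : 1 ≤ p) {μ ν ρ : Measure X} {π₁ π₂ : Measure (X × X)}
    (h₁ : π₁ ∈ Adm μ ν) (h₂ : π₂ ∈ Adm ν ρ) :
    Wp p μ ρ ≤ (∫⁻ z : X × X, edist z.1 z.2 ^ p ∂π₁) ^ (1 / p)
      + (∫⁻ z : X × X, edist z.1 z.2 ^ p ∂π₂) ^ (1 / p) := by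
  obtain ⟨hP₁, h₁f, h₁s⟩ := h₁
  obtain ⟨hP₂, h₂f, h₂s⟩ := h₂
  haveI := hP₁; haveI := hP₂
  haveI : IsProbabilityMeasure μ := h₁f ▸
    Measure.isProbabilityMeasure_map (μ := π₁) (f := Prod.fst) measurable_fst.aemeasurable
  haveI : IsProbabilityMeasure ν := h₁s ▸
    Measure.isProbabilityMeasure_map (μ := π₁) (f := Prod.snd) measurable_snd.aemeasurable
  haveI : IsProbabilityMeasure ρ := h₂s ▸
    Measure.isProbabilityMeasure_map (μ := π₂) (f := Prod.snd) measurable_snd.aemeasurable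
  have hX : Nonempty X := by
    rcases isEmpty_or_nonempty X with h | h
    · exfalso
      have h0 : μ Set.univ = 1 := measure_univ
      rw [Set.univ_eq_empty_iff.2 h, measure_empty] at h0
      exact zero_ne_one h0
    · exact h
  set σ : Measure (X × X) := π₁.map Prod.swap with hσ
  haveI : IsProbabilityMeasure σ := Measure.isProbabilityMeasure_map measurable_swap.aemeasurable
  have hσf : σ.fst = ν := by
    rw [Measure.fst, hσ, Measure.map_map measurable_fst measurable_swap]
    exact h₁s
  have hπ₂f : π₂.fst = ν := h₂f
  set κ₁ := σ.condKernel with hκ₁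
  set κ₂ := π₂.condKernel with hκ₂
  have hd₁ : ν ⊗ₘ κ₁ = σ := by
    conv_rhs => rw [← σ.disintegrate σ.condKernel]
    rw [hσf]
  have hd₂ : ν ⊗ₘ κ₂ = π₂ := by
    conv_rhs => rw [← π₂.disintegrate π₂.condKernel]
    rw [hπ₂f]
  set m : Measure (X × X × X) := ν ⊗ₘ (κ₁ ×ₖ κ₂) with hm
  haveI : IsProbabilityMeasure m := by infer_instance
  have hm1 : Measurable fun q : X × X × X => (q.1, q.2.1) :=
    measurable_fst.prodMk (measurable_fst.comp measurable_snd)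
  have hm2 : Measurable fun q : X × X × X => (q.1, q.2.2) :=
    measurable_fst.prodMk (measurable_snd.comp measurable_snd)
  -- marginals of m on the (1,2.1) and (1,2.2) coordinates
  have marg1 : m.map (fun q : X × X × X => (q.1, q.2.1)) = ν ⊗ₘ κ₁ := by
    refine Measure.ext fun s hs => ?_
    rw [Measure.map_apply hm1 hs, hm, Measure.compProd_apply (hm1 hs),
      Measure.compProd_apply hs]
    refine lintegral_congr fun y => ?_
    have hset : (Prod.mk y ⁻¹' ((fun q : X × X × X => (q.1, q.2.1)) ⁻¹' s))
        = (Prod.mk y ⁻¹' s) ×ˢ (Set.univ : Set X) := by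
      ext r; simp [Set.mem_prod]
    rw [hset, Kernel.prod_apply, Measure.prod_prod, measure_univ, mul_one]
  have marg2 : m.map (fun q : X × X × X => (q.1, q.2.2)) = ν ⊗ₘ κ₂ := by
    refine Measure.ext fun s hs => ?_
    rw [Measure.map_apply hm2 hs, hm, Measure.compProd_apply (hm2 hs),
      Measure.compProd_apply hs]
    refine lintegral_congr fun y => ?_
    have hset : (Prod.mk y ⁻¹' ((fun q : X × X × X => (q.1, q.2.2)) ⁻¹' s))
        = (Set.univ : Set X) ×ˢ (Prod.mk y ⁻¹' s) := by
      ext r; simp [Set.mem_prod]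
    rw [hset, Kernel.prod_apply, Measure.prod_prod, measure_univ, one_mul]
  -- the glued coupling
  set τ : Measure (X × X) := m.map Prod.snd with hτ
  have hτAdm : τ ∈ Adm μ ρ := by
    refine ⟨Measure.isProbabilityMeasure_map measurable_snd.aemeasurable, ?_, ?_⟩
    · rw [hτ, Measure.map_map measurable_fst measurable_snd,
        show (Prod.fst ∘ Prod.snd : X × X × X → X)
          = Prod.snd ∘ (fun q : X × X × X => (q.1, q.2.1)) from rfl,
        ← Measure.map_map measurable_snd hm1, marg1, hd₁, hσ,
        Measure.map_map measurable_snd measurable_swap]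
      exact h₁f
    · rw [hτ, Measure.map_map measurable_snd measurable_snd,
        show (Prod.snd ∘ Prod.snd : X × X × X → X)
          = Prod.snd ∘ (fun q : X × X × X => (q.1, q.2.2)) from rfl,
        ← Measure.map_map measurable_snd hm2, marg2, hd₂]
      exact h₂s
  -- cost estimate
  have hf : Measurable fun q : X × X × X => edist q.2.1 q.1 :=
    (measurable_fst.comp measurable_snd).edist measurable_fst
  have hg : Measurable fun q : X × X × X => edist q.1 q.2.2 :=
    measurable_fst.edist (measurable_snd.comp measurable_snd)
  have hcost : ∫⁻ z : X × X, edist z.1 z.2 ^ p ∂τ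
      = ∫⁻ q : X × X × X, edist q.2.1 q.2.2 ^ p ∂m := by
    rw [hτ, lintegral_map measurable_ecost measurable_snd]
  have hmono : ∫⁻ q : X × X × X, edist q.2.1 q.2.2 ^ p ∂m
      ≤ ∫⁻ q : X × X × X, ((fun q : X × X × X => edist q.2.1 q.1)
          + fun q : X × X × X => edist q.1 q.2.2) q ^ p ∂m := by
    refine lintegral_mono fun q => ENNReal.rpow_le_rpow ?_ (hp0 hp).le
    exact edist_triangle _ _ _
  have hLp := ENNReal.lintegral_Lp_add_le (μ := m) hf.aemeasurable hg.aemeasurable hp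
  have hcf : ∫⁻ q : X × X × X, edist q.2.1 q.1 ^ p ∂m
      = ∫⁻ z : X × X, edist z.1 z.2 ^ p ∂π₁ := by
    have e1 : ∫⁻ w : X × X, edist w.2 w.1 ^ p ∂(m.map (fun q : X × X × X => (q.1, q.2.1)))
        = ∫⁻ q : X × X × X, edist q.2.1 q.1 ^ p ∂m := by
      rw [lintegral_map ((measurable_snd.edist measurable_fst).pow measurable_const) hm1]
    rw [← e1, marg1, hd₁, hσ, lintegral_map
      ((measurable_snd.edist measurable_fst).pow measurable_const) measurable_swap]
    rfl
  have hcg : ∫⁻ q : X × X × X, edist q.1 q.2.2 ^ p ∂m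
      = ∫⁻ z : X × X, edist z.1 z.2 ^ p ∂π₂ := by
    have e1 : ∫⁻ w : X × X, edist w.1 w.2 ^ p ∂(m.map (fun q : X × X × X => (q.1, q.2.2)))
        = ∫⁻ q : X × X × X, edist q.1 q.2.2 ^ p ∂m := by
      rw [lintegral_map ((measurable_fst.edist measurable_snd).pow measurable_const) hm2]
    rw [← e1, marg2, hd₂]
  calc Wp p μ ρ ≤ (∫⁻ z : X × X, edist z.1 z.2 ^ p ∂τ) ^ (1 / p) := wp_le_of_mem hp hτAdm
    _ ≤ (∫⁻ q : X × X × X, ((fun q : X × X × X => edist q.2.1 q.1)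
          + fun q : X × X × X => edist q.1 q.2.2) q ^ p ∂m) ^ (1 / p) := by
        rw [hcost]; exact ENNReal.rpow_le_rpow hmono (by positivity)
    _ ≤ (∫⁻ q : X × X × X, edist q.2.1 q.1 ^ p ∂m) ^ (1 / p)
        + (∫⁻ q : X × X × X, edist q.1 q.2.2 ^ p ∂m) ^ (1 / p) := hLp
    _ = _ := by rw [hcf, hcg]

lemma wp_triangle (hp : 1 ≤ p) (μ ν ρ : Measure X) [IsProbabilityMeasure ν] :
    Wp p μ ρ ≤ Wp p μ ν + Wp p ν ρ := by
  rw [wp_eq_iInf hp μ ν, wp_eq_iInf hp ν ρ]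
  simp only [ENNReal.iInf_add, ENNReal.add_iInf]
  exact le_iInf₂ fun π₁ h₁ => le_iInf₂ fun π₂ h₂ => glue hp h₂ h₁
end Tri

section DP
variable {X : Type*} [MeasurableSpace X] [MetricSpace X] [BorelSpace X]
  [SecondCountableTopology X] [CompleteSpace X] {p : ℝ}
  {G : Type*} [Group G] [MulAction G X] (hiso : ∀ g : G, Isometry (fun x : X => g • x))

lemma map_one_smul (μ : Measure X) : μ.map (fun x : X => (1:G) • x) = μ := by
  rw [show (fun x : X => (1:G) • x) = id from funext fun x => one_smul G x, Measure.map_id]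

include hiso

lemma measurable_smul_of_iso (g : G) : Measurable fun x : X => g • x :=
  (hiso g).continuous.measurable

lemma map_smul_smul (μ : Measure X) (g h : G) :
    (μ.map (fun x : X => g • x)).map (fun x : X => h • x)
      = μ.map (fun x : X => (h * g) • x) := by
  rw [Measure.map_map (measurable_smul_of_iso hiso h) (measurable_smul_of_iso hiso g)]
  congr 1
  funext x
  simp [Function.comp, mul_smul]

lemma wp_smul (hp : 1 ≤ p) (μ ν : Measure X) (g : G) :
    Wp p (μ.map (fun x : X => g • x)) (ν.map (fun x : X => g • x)) = Wp p μ ν := by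
  refine le_antisymm (wp_map_map_le hp (measurable_smul_of_iso hiso g) fun x y =>
    (hiso g).edist_eq x y) ?_
  have h2 := wp_map_map_le hp (μ := μ.map (fun x : X => g • x))
    (ν := ν.map (fun x : X => g • x)) (measurable_smul_of_iso hiso g⁻¹)
    (fun x y => (hiso g⁻¹).edist_eq x y)
  rwa [map_smul_smul hiso, map_smul_smul hiso, inv_mul_cancel, map_one_smul,
    map_one_smul] at h2

lemma dp_le_wp (hp : 1 ≤ p) (μ ν : Measure X) : DpAct G p μ ν ≤ Wp p μ ν := by
  have h := iInf_le (fun g : G => Wp p (μ.map (fun x : X => g • x)) ν) (1 : G)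
  rwa [map_one_smul] at h

lemma dp_eq_wp_smul (hp : 1 ≤ p) (μ ν : Measure X) (g : G) :
    Wp p (μ.map (fun x : X => g • x)) ν = Wp p μ (ν.map (fun x : X => g⁻¹ • x)) := by
  conv_lhs => rw [← wp_smul hiso hp (μ.map (fun x : X => g • x)) ν g⁻¹]
  rw [map_smul_smul hiso, inv_mul_cancel, map_one_smul]

lemma dp_symm (hp : 1 ≤ p) (μ ν : Measure X) : DpAct G p μ ν = DpAct G p ν μ := by
  have key : ∀ (α β : Measure X), DpAct G p β α ≤ DpAct G p α β := by
    intro α β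
    refine le_iInf fun g => ?_
    have h1 := iInf_le (fun h : G => Wp p (β.map (fun x : X => h • x)) α) g⁻¹
    refine h1.trans_eq ?_
    rw [dp_eq_wp_smul hiso hp β α g⁻¹, inv_inv]
    exact wp_symm hp _ _
  exact le_antisymm (key ν μ) (key μ ν)

lemma dp_triangle (hp : 1 ≤ p) (μ ν ρ : Measure X) [IsProbabilityMeasure ν] :
    DpAct G p μ ρ ≤ DpAct G p μ ν + DpAct G p ν ρ := by
  rw [show DpAct G p μ ν = ⨅ g : G, Wp p (μ.map (fun x : X => g • x)) ν from rfl,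
    show DpAct G p ν ρ = ⨅ h : G, Wp p (ν.map (fun x : X => h • x)) ρ from rfl]
  rw [ENNReal.iInf_add]
  refine le_iInf fun g => ?_
  rw [ENNReal.add_iInf]
  refine le_iInf fun h => ?_
  haveI : IsProbabilityMeasure (ν.map (fun x : X => h • x)) :=
    Measure.isProbabilityMeasure_map (measurable_smul_of_iso hiso h).aemeasurable
  calc DpAct G p μ ρ ≤ Wp p (μ.map (fun x : X => (h * g) • x)) ρ :=
        iInf_le (fun k : G => Wp p (μ.map (fun x : X => k • x)) ρ) (h * g)
    _ ≤ Wp p (μ.map (fun x : X => (h * g) • x)) (ν.map (fun x : X => h • x))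
        + Wp p (ν.map (fun x : X => h • x)) ρ := wp_triangle hp _ _ _
    _ = Wp p (μ.map (fun x : X => g • x)) ν + Wp p (ν.map (fun x : X => h • x)) ρ := by
        rw [← map_smul_smul hiso μ g h, wp_smul hiso hp]
end DP

section Cont
variable {X : Type*} [MetricSpace X] [MeasurableSpace X] [BorelSpace X]
  [SecondCountableTopology X] [ProperSpace X]
  {G : Type*} [Group G] [TopologicalSpace G] [IsTopologicalGroup G]
  [MulAction G X] [ContinuousSMul G X] {p : ℝ}

lemma smul_lintegral_small (hp : 1 ≤ p)
    (hiso : ∀ g : G, Isometry (fun x : X => g • x))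
    (μ : Measure X) [IsProbabilityMeasure μ] (hμm : HasFinitePMoment p μ)
    (g : G) {ε : ℝ≥0∞} (hε : 0 < ε) :
    ∃ U ∈ 𝓝 g, ∀ h ∈ U, ∫⁻ x, edist (g • x) (h • x) ^ p ∂μ ≤ ε := by
  obtain ⟨x₀, hx₀⟩ := hμm
  set e := min ε 1 with he
  have he0 : 0 < e := lt_min hε zero_lt_one
  have heT : e ≠ ⊤ := ne_top_of_le_ne_top one_ne_top (min_le_right _ _)
  have heε : e ≤ ε := min_le_left _ _
  have he2 : 0 < e / 2 := ENNReal.div_pos he0.ne' ofNat_ne_top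
  have he2T : e / 2 ≠ ⊤ := by
    exact ne_top_of_le_ne_top heT (ENNReal.half_le_self)
  set c₀ := dist (g • x₀) x₀ with hc₀
  have hc₀0 : 0 ≤ c₀ := dist_nonneg
  set C := ENNReal.ofReal (2 * c₀ + 1) with hC
  set F : X → ℝ≥0∞ := fun x => 4 * edist x x₀ + C with hF
  have hceq : Continuous fun h : G => h • x₀ := continuous_id.smul continuous_const
  set V₁ := {h : G | dist (h • x₀) (g • x₀) < 1} with hV₁def
  have hV₁ : V₁ ∈ 𝓝 g := by
    have hopen : IsOpen V₁ := by
      have : V₁ = (fun h : G => h • x₀) ⁻¹' (Metric.ball (g • x₀) 1) := by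
        ext h; simp [hV₁def, Metric.mem_ball]
      rw [this]; exact Metric.isOpen_ball.preimage hceq
    exact hopen.mem_nhds (by simp [hV₁def])
  -- pointwise domination
  have hFbound : ∀ h ∈ V₁, ∀ x : X, edist (g • x) (h • x) ≤ F x := by
    intro h hh x
    have hdist : dist (g • x) (h • x) ≤ 4 * dist x x₀ + (2 * c₀ + 1) := by
      have t1 : dist (g • x) (h • x) ≤ dist (g • x) x + dist (h • x) x := by
        rw [dist_comm (h • x) x]; exact dist_triangle _ _ _
      have t2 : dist (g • x) x ≤ dist (g • x) (g • x₀) + dist (g • x₀) x₀ + dist x₀ x :=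
        dist_triangle4 _ _ _ _
      have t3 : dist (h • x) x ≤ dist (h • x) (h • x₀) + dist (h • x₀) x₀ + dist x₀ x :=
        dist_triangle4 _ _ _ _
      have e2 : dist (g • x) (g • x₀) = dist x x₀ := (hiso g).dist_eq x x₀
      have e3 : dist (h • x) (h • x₀) = dist x x₀ := (hiso h).dist_eq x x₀
      have t4 : dist (h • x₀) x₀ ≤ 1 + c₀ := by
        have := dist_triangle (h • x₀) (g • x₀) x₀
        have hh' : dist (h • x₀) (g • x₀) < 1 := hh
        simp only [hc₀]; linarith
      have hcomm : dist x₀ x = dist x x₀ := dist_comm _ _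
      linarith
    calc edist (g • x) (h • x) = ENNReal.ofReal (dist (g • x) (h • x)) := edist_dist _ _
      _ ≤ ENNReal.ofReal (4 * dist x x₀ + (2 * c₀ + 1)) := ENNReal.ofReal_le_ofReal hdist
      _ = ENNReal.ofReal (4 * dist x x₀) + C := by
          rw [ENNReal.ofReal_add (by positivity) (by positivity)]
      _ = 4 * edist x x₀ + C := by
          rw [ENNReal.ofReal_mul (by norm_num), edist_dist]
          norm_num
  have hedm : Measurable fun x : X => edist x x₀ := measurable_id.edist measurable_const
  have hFmeas : Measurable F := (measurable_const.mul hedm).add measurable_const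
  have hFpmeas : Measurable fun x => F x ^ p := hFmeas.pow measurable_const
  -- integrability of the dominating function
  have hFint : ∫⁻ x, F x ^ p ∂μ ≠ ⊤ := by
    have hb : ∀ x : X, F x ^ p ≤ 2 ^ p * (4 ^ p * edist x x₀ ^ p + C ^ p) := by
      intro x
      calc F x ^ p ≤ 2 ^ p * ((4 * edist x x₀) ^ p + C ^ p) := two_bound hp _ _
        _ = 2 ^ p * (4 ^ p * edist x x₀ ^ p + C ^ p) := by
            rw [ENNReal.mul_rpow_of_nonneg _ _ (hp0 hp).le]
    have hint : ∫⁻ x, F x ^ p ∂μ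
        ≤ 2 ^ p * (4 ^ p * ∫⁻ x, edist x x₀ ^ p ∂μ + C ^ p) := by
      calc ∫⁻ x, F x ^ p ∂μ ≤ ∫⁻ x, 2 ^ p * (4 ^ p * edist x x₀ ^ p + C ^ p) ∂μ :=
            lintegral_mono hb
        _ = 2 ^ p * (4 ^ p * ∫⁻ x, edist x x₀ ^ p ∂μ + C ^ p) := by
            have hm : Measurable fun x : X => edist x x₀ ^ p := hedm.pow measurable_const
            rw [lintegral_const_mul _ (f := fun x : X => (4:ℝ≥0∞) ^ p * edist x x₀ ^ p + C ^ p)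
                ((measurable_const.mul hm).add measurable_const),
              lintegral_add_right _ measurable_const, lintegral_const_mul _ hm,
              lintegral_const, measure_univ, mul_one]
    refine ne_top_of_le_ne_top ?_ hint
    have h2 : (2 : ℝ≥0∞) ^ p ≠ ⊤ := ENNReal.rpow_ne_top_of_nonneg (hp0 hp).le (by norm_num)
    have h4 : (4 : ℝ≥0∞) ^ p ≠ ⊤ := ENNReal.rpow_ne_top_of_nonneg (hp0 hp).le (by norm_num)
    have hC' : C ^ p ≠ ⊤ := ENNReal.rpow_ne_top_of_nonneg (hp0 hp).le ofReal_ne_top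
    exact ENNReal.mul_ne_top h2 (ENNReal.add_ne_top.2 ⟨ENNReal.mul_ne_top h4 hx₀, hC'⟩)
  -- tail estimate
  have htail : ∃ R : ℝ, 0 ≤ R ∧ ∫⁻ x in (Metric.closedBall x₀ R)ᶜ, F x ^ p ∂μ ≤ e / 2 := by
    set fn : ℕ → X → ℝ≥0∞ :=
      fun n x => ((Metric.closedBall x₀ (n : ℝ))ᶜ).indicator (fun x => F x ^ p) x with hfn
    have hmeasn : ∀ n, Measurable (fn n) :=
      fun n => hFpmeas.indicator (measurableSet_closedBall.compl)
    have hbnd : ∀ n, fn n ≤ᵐ[μ] fun x => F x ^ p :=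
      fun n => Filter.Eventually.of_forall fun x => Set.indicator_le_self _ _ x
    have hlim : ∀ᵐ x ∂μ, Tendsto (fun n => fn n x) atTop (𝓝 0) := by
      refine Filter.Eventually.of_forall fun x => ?_
      have : ∀ᶠ n : ℕ in atTop, fn n x = 0 := by
        filter_upwards [Filter.eventually_ge_atTop ⌈dist x x₀⌉₊] with n hn
        have hx : x ∈ Metric.closedBall x₀ (n : ℝ) := by
          rw [Metric.mem_closedBall]
          exact (Nat.le_ceil _).trans (by exact_mod_cast hn)
        simp [hfn, Set.indicator_of_notMem, hx]
      exact Tendsto.congr' (this.mono fun n h => h.symm) tendsto_const_nhds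
    have htt := tendsto_lintegral_of_dominated_convergence (fun x => F x ^ p)
      hmeasn hbnd hFint hlim
    rw [lintegral_zero] at htt
    have hev := htt.eventually_lt_const he2
    obtain ⟨n, hn⟩ := hev.exists
    refine ⟨(n : ℝ), Nat.cast_nonneg n, ?_⟩
    rw [← lintegral_indicator measurableSet_closedBall.compl]
    exact hn.le
  obtain ⟨R, hR0, hRtail⟩ := htail
  set K := Metric.closedBall x₀ R with hK
  have hKcomp : IsCompact K := isCompact_closedBall x₀ R
  -- choice of the real threshold δr
  set er := (e / 2).toReal with her'
  have her : 0 < er := ENNReal.toReal_pos he2.ne' he2T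
  set δr := er ^ (1 / p) with hδr'
  have hδr : 0 < δr := Real.rpow_pos_of_pos her _
  have hδp : ENNReal.ofReal (δr ^ p) = e / 2 := by
    rw [hδr', ← Real.rpow_mul her.le, one_div_mul_cancel (hp0 hp).ne', Real.rpow_one,
      ENNReal.ofReal_toReal he2T]
  -- tube lemma around {g} × K
  set Φ : G × X → ℝ := fun q => dist (g • q.2) (q.1 • q.2) with hΦdef
  have hΦ : Continuous Φ :=
    (continuous_const.smul continuous_snd).dist (continuous_fst.smul continuous_snd)
  set O := Φ ⁻¹' (Set.Iio δr) with hO'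
  have hOopen : IsOpen O := isOpen_Iio.preimage hΦ
  have hgK : ∀ x : X, x ∈ K → (g, x) ∈ O := by
    intro x hx
    simp only [hO', Set.mem_preimage, hΦdef, Set.mem_Iio]
    simpa [dist_self] using hδr
  have key : ∀ x : X, x ∈ K → ∃ w : Set (G × X), IsOpen w ∧ (g, x) ∈ w ∧ w ⊆ O :=
    fun x hx => ⟨O, hOopen, hgK x hx, le_rfl⟩
  have key2 : ∀ x : X, x ∈ K →
      ∃ u : Set G, ∃ v : Set X, IsOpen u ∧ IsOpen v ∧ g ∈ u ∧ x ∈ v ∧ u ×ˢ v ⊆ O := by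
    intro x hx
    obtain ⟨u, v, hu, hv, hgu, hxv, huv⟩ := isOpen_prod_iff.mp hOopen g x (hgK x hx)
    exact ⟨u, v, hu, hv, hgu, hxv, huv⟩
  classical
  choose! u v hu hv hgu hxv huv using key2
  obtain ⟨t, htK, htcov⟩ := hKcomp.elim_nhds_subcover v fun x hx => (hv x hx).mem_nhds (hxv x hx)
  set U' := ⋂ x ∈ t, u x with hU'
  have hU'nhds : U' ∈ 𝓝 g := by
    rw [hU']
    refine (biInter_mem t.finite_toSet).2 fun x hx => ?_
    exact (hu x (htK x hx)).mem_nhds (hgu x (htK x hx))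
  have hU'prop : ∀ h ∈ U', ∀ y ∈ K, dist (g • y) (h • y) < δr := by
    intro h hh y hy
    obtain ⟨x, hxt, hyv⟩ := Set.mem_iUnion₂.mp (htcov hy)
    have hhu : h ∈ u x := by
      have := Set.mem_iInter₂.mp hh x hxt
      exact this
    have : (h, y) ∈ O := huv x (htK x hxt) (Set.mk_mem_prod hhu hyv)
    simpa [hO', hΦdef] using this
  refine ⟨U' ∩ V₁, Filter.inter_mem hU'nhds hV₁, fun h hh => ?_⟩
  obtain ⟨hh1, hh2⟩ := hh
  have hmeash : Measurable fun x : X => edist (g • x) (h • x) ^ p := by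
    have h1 : Continuous fun x : X => g • x := (hiso g).continuous
    have h2 : Continuous fun x : X => h • x := (hiso h).continuous
    exact ((h1.measurable.edist h2.measurable).pow measurable_const)
  have hsplit := lintegral_add_compl (fun x => edist (g • x) (h • x) ^ p)
    (measurableSet_closedBall (x := x₀) (ε := R)) (μ := μ)
  have hin : ∫⁻ x in K, edist (g • x) (h • x) ^ p ∂μ ≤ e / 2 := by
    have hle : ∀ x ∈ K, edist (g • x) (h • x) ^ p ≤ e / 2 := by
      intro x hx
      have hd : dist (g • x) (h • x) < δr := hU'prop h hh1 x hx
      calc edist (g • x) (h • x) ^ p = ENNReal.ofReal (dist (g • x) (h • x)) ^ p := by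
            rw [edist_dist]
        _ = ENNReal.ofReal (dist (g • x) (h • x) ^ p) :=
            ENNReal.ofReal_rpow_of_nonneg dist_nonneg (hp0 hp).le
        _ ≤ ENNReal.ofReal (δr ^ p) :=
            ENNReal.ofReal_le_ofReal (Real.rpow_le_rpow dist_nonneg hd.le (hp0 hp).le)
        _ = e / 2 := hδp
    calc ∫⁻ x in K, edist (g • x) (h • x) ^ p ∂μ ≤ ∫⁻ _ in K, e / 2 ∂μ :=
          setLIntegral_mono measurable_const hle
      _ = e / 2 * μ K := setLIntegral_const K (e / 2)
      _ ≤ e / 2 * 1 := by gcongr; exact prob_le_one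
      _ = e / 2 := mul_one _
  have hout : ∫⁻ x in Kᶜ, edist (g • x) (h • x) ^ p ∂μ ≤ e / 2 := by
    refine le_trans (setLIntegral_mono hFpmeas fun x _ => ?_) hRtail
    exact ENNReal.rpow_le_rpow (hFbound h hh2 x) (hp0 hp).le
  calc ∫⁻ x, edist (g • x) (h • x) ^ p ∂μ
      = ∫⁻ x in K, edist (g • x) (h • x) ^ p ∂μ
        + ∫⁻ x in Kᶜ, edist (g • x) (h • x) ^ p ∂μ := hsplit.symm
    _ ≤ e / 2 + e / 2 := add_le_add hin hout
    _ = e := ENNReal.add_halves e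
    _ ≤ ε := heε

end Cont

section Att
variable {X : Type*} [MetricSpace X] [MeasurableSpace X] [BorelSpace X]
  [SecondCountableTopology X] [ProperSpace X] [CompleteSpace X]
  {G : Type*} [Group G] [TopologicalSpace G] [IsTopologicalGroup G]
  [MulAction G X] [ContinuousSMul G X] {p : ℝ}

lemma wp_pair (hp : 1 ≤ p) (hiso : ∀ g : G, Isometry (fun x : X => g • x))
    (μ : Measure X) [IsProbabilityMeasure μ] (g h : G) :
    Wp p (μ.map (fun x : X => g • x)) (μ.map (fun x : X => h • x))
      ≤ (∫⁻ x, edist (g • x) (h • x) ^ p ∂μ) ^ (1 / p) := by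
  have hg : Measurable fun x : X => g • x := (hiso g).continuous.measurable
  have hh : Measurable fun x : X => h • x := (hiso h).continuous.measurable
  have hm : Measurable fun x : X => (g • x, h • x) := hg.prodMk hh
  have hT : μ.map (fun x : X => (g • x, h • x))
      ∈ Adm (μ.map (fun x : X => g • x)) (μ.map (fun x : X => h • x)) := by
    refine ⟨Measure.isProbabilityMeasure_map hm.aemeasurable, ?_, ?_⟩
    · rw [Measure.map_map measurable_fst hm]; rfl
    · rw [Measure.map_map measurable_snd hm]; rfl
  refine (wp_le_of_mem hp hT).trans_eq ?_
  congr 1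
  rw [lintegral_map measurable_ecost hm]

lemma sublevel_closed (hp : 1 ≤ p) (hiso : ∀ g : G, Isometry (fun x : X => g • x))
    (μ ν : Measure X) [IsProbabilityMeasure μ] [IsProbabilityMeasure ν]
    (hμm : HasFinitePMoment p μ) (c : ℝ≥0∞) :
    IsClosed {g : G | Wp p (μ.map (fun x : X => g • x)) ν ≤ c} := by
  rcases eq_or_ne c ⊤ with rfl | hc
  · have : {g : G | Wp p (μ.map (fun x : X => g • x)) ν ≤ ⊤} = Set.univ := by
      ext g; simp
    rw [this]; exact isClosed_univ
  refine isClosed_of_closure_subset fun g hg => ?_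
  show Wp p (μ.map (fun x : X => g • x)) ν ≤ c
  refine ENNReal.le_of_forall_pos_le_add fun ε hε _ => ?_
  have hεp : (0 : ℝ≥0∞) < (ε : ℝ≥0∞) ^ p :=
    ENNReal.rpow_pos (ENNReal.coe_pos.2 hε) ENNReal.coe_ne_top
  obtain ⟨U, hU, hUp⟩ := smul_lintegral_small hp hiso μ hμm g hεp
  obtain ⟨h, hhU, hhS⟩ := mem_closure_iff_nhds.mp hg U hU
  haveI : IsProbabilityMeasure (μ.map (fun x : X => h • x)) :=
    Measure.isProbabilityMeasure_map (hiso h).continuous.measurable.aemeasurable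
  have step : Wp p (μ.map (fun x : X => g • x)) (μ.map (fun x : X => h • x)) ≤ ε := by
    refine (wp_pair hp hiso μ g h).trans ?_
    have h1 : (∫⁻ x, edist (g • x) (h • x) ^ p ∂μ) ≤ (ε : ℝ≥0∞) ^ p := hUp h hhU
    calc (∫⁻ x, edist (g • x) (h • x) ^ p ∂μ) ^ (1 / p)
        ≤ ((ε : ℝ≥0∞) ^ p) ^ (1 / p) := ENNReal.rpow_le_rpow h1 (by positivity)
      _ = (ε : ℝ≥0∞) := by rw [one_div, ENNReal.rpow_rpow_inv (hp0 hp).ne']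
  calc Wp p (μ.map (fun x : X => g • x)) ν
      ≤ Wp p (μ.map (fun x : X => g • x)) (μ.map (fun x : X => h • x))
        + Wp p (μ.map (fun x : X => h • x)) ν := wp_triangle hp _ _ _
    _ ≤ ε + c := add_le_add step hhS
    _ = c + ε := add_comm _ _

lemma nonempty_of_prob (μ : Measure X) [IsProbabilityMeasure μ] : Nonempty X := by
  rcases isEmpty_or_nonempty X with h | h
  · exfalso
    have h0 : μ Set.univ = 1 := measure_univ
    rw [Set.univ_eq_empty_iff.2 h, measure_empty] at h0
    exact zero_ne_one h0
  · exact h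

lemma tail_small (μ : Measure X) [IsProbabilityMeasure μ] (x₀ : X) {a : ℝ≥0∞} (ha : 0 < a) :
    ∃ n : ℕ, μ ((Metric.closedBall x₀ (n : ℝ))ᶜ) < a := by
  have hmono : Antitone fun n : ℕ => (Metric.closedBall x₀ (n : ℝ))ᶜ := by
    intro m n hmn
    exact Set.compl_subset_compl.2 (Metric.closedBall_subset_closedBall (by exact_mod_cast hmn))
  have hinter : ⋂ n : ℕ, (Metric.closedBall x₀ (n : ℝ))ᶜ = ∅ := by
    rw [← Set.compl_iUnion]
    rw [Set.compl_empty_iff]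
    refine Set.eq_univ_of_forall fun x => ?_
    obtain ⟨n, hn⟩ := exists_nat_ge (dist x x₀)
    exact Set.mem_iUnion.2 ⟨n, Metric.mem_closedBall.2 hn⟩
  have htt := MeasureTheory.tendsto_measure_iInter_atTop (μ := μ)
    (s := fun n : ℕ => (Metric.closedBall x₀ (n : ℝ))ᶜ)
    (fun n => (measurableSet_closedBall.compl).nullMeasurableSet) hmono
    ⟨0, measure_ne_top μ _⟩
  rw [hinter, measure_empty] at htt
  exact (htt.eventually_lt_const ha).exists

lemma compact_containment (hp : 1 ≤ p) (hiso : ∀ g : G, Isometry (fun x : X => g • x))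
    (hproper : IsProperMap (fun q : G × X => (q.1 • q.2, q.2)))
    (μ ν : Measure X) [IsProbabilityMeasure μ] [IsProbabilityMeasure ν]
    {c : ℝ≥0∞} (hc : c ≠ ⊤) :
    ∃ K : Set G, IsCompact K ∧
      {g : G | Wp p (μ.map (fun x : X => g • x)) ν ≤ c} ⊆ K := by
  have hX : Nonempty X := nonempty_of_prob μ
  obtain ⟨x₀⟩ := hX
  have quarter_pos : (0 : ℝ≥0∞) < 4⁻¹ := by simp
  obtain ⟨nμ, hnμ⟩ := tail_small μ x₀ quarter_pos
  obtain ⟨nν, hnν⟩ := tail_small ν x₀ quarter_pos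
  set r : ℝ := max (nμ : ℝ) (nν : ℝ) with hr
  have hr0 : 0 ≤ r := le_max_of_le_left (Nat.cast_nonneg _)
  have hμr : μ ((Metric.closedBall x₀ r)ᶜ) < 4⁻¹ :=
    lt_of_le_of_lt (measure_mono (Set.compl_subset_compl.2
      (Metric.closedBall_subset_closedBall (le_max_left _ _)))) hnμ
  have hνr : ν ((Metric.closedBall x₀ r)ᶜ) < 4⁻¹ :=
    lt_of_le_of_lt (measure_mono (Set.compl_subset_compl.2
      (Metric.closedBall_subset_closedBall (le_max_right _ _)))) hnν
  set B : ℝ≥0∞ := c ^ p + 1 with hB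
  have hBne : B ≠ ⊤ := by
    simp [hB, ENNReal.add_ne_top, ENNReal.rpow_ne_top_of_nonneg (hp0 hp).le hc]
  have hBpos : (0 : ℝ≥0∞) < B := by
    rw [hB]; exact lt_of_lt_of_le zero_lt_one le_add_self
  set a : ℝ≥0∞ := 4 * B with ha
  have haT : a ≠ ⊤ := ENNReal.mul_ne_top (by norm_num) hBne
  set Rr : ℝ := a.toReal ^ (1 / p) with hRr
  have hRr0 : 0 ≤ Rr := Real.rpow_nonneg ENNReal.toReal_nonneg _
  have hRrp : ENNReal.ofReal (Rr ^ p) = a := by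
    rw [hRr, ← Real.rpow_mul ENNReal.toReal_nonneg, one_div_mul_cancel (hp0 hp).ne',
      Real.rpow_one, ENNReal.ofReal_toReal haT]
  set K : Set G := Prod.fst '' ((fun q : G × X => (q.1 • q.2, q.2)) ⁻¹'
    (Metric.closedBall x₀ (Rr + r) ×ˢ Metric.closedBall x₀ r)) with hKdef
  refine ⟨K, ((hproper.isCompact_preimage
    ((isCompact_closedBall _ _).prod (isCompact_closedBall _ _)))).image continuous_fst,
    fun g hg => ?_⟩
  -- get a near-optimal coupling
  have hWle : Wp p (μ.map (fun x : X => g • x)) ν ≤ c := hg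
  have hinf : (⨅ π ∈ Adm (μ.map (fun x : X => g • x)) ν,
      ∫⁻ z : X × X, edist z.1 z.2 ^ p ∂π) ≤ c ^ p := by
    have := ENNReal.rpow_le_rpow hWle (hp0 hp).le
    rwa [Wp, one_div, ENNReal.rpow_inv_rpow (hp0 hp).ne'] at this
  have hltB : (⨅ π ∈ Adm (μ.map (fun x : X => g • x)) ν,
      ∫⁻ z : X × X, edist z.1 z.2 ^ p ∂π) < B := by
    refine lt_of_le_of_lt hinf ?_
    rw [hB]
    exact ENNReal.lt_add_right (ENNReal.rpow_ne_top_of_nonneg (hp0 hp).le hc) one_ne_zero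
  obtain ⟨π, hπ, hπc⟩ : ∃ π ∈ Adm (μ.map (fun x : X => g • x)) ν,
      ∫⁻ z : X × X, edist z.1 z.2 ^ p ∂π < B := by
    simpa using (iInf_lt_iff.mp hltB).imp fun π h => iInf_lt_iff.mp h
  obtain ⟨hπP, hπ1, hπ2⟩ := hπ
  haveI := hπP
  have hgmeas : Measurable fun x : X => g • x := (hiso g).continuous.measurable
  have hginv : Measurable fun u : X => g⁻¹ • u := (hiso g⁻¹).continuous.measurable
  -- the three events
  set A₁ : Set (X × X) := Prod.snd ⁻¹' (Metric.closedBall x₀ r) with hA₁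
  set A₂ : Set (X × X) := Prod.fst ⁻¹' ((fun u : X => g⁻¹ • u) ⁻¹' Metric.closedBall x₀ r)
    with hA₂
  set A₃ : Set (X × X) := {z : X × X | edist z.1 z.2 ^ p < a} with hA₃
  have hA₁m : MeasurableSet A₁ := measurable_snd measurableSet_closedBall
  have hA₂m : MeasurableSet A₂ := measurable_fst (hginv measurableSet_closedBall)
  have hA₃m : MeasurableSet A₃ := measurable_ecost measurableSet_Iio
  have hm₁ : π A₁ᶜ < 4⁻¹ := by
    have : A₁ᶜ = Prod.snd ⁻¹' (Metric.closedBall x₀ r)ᶜ := rfl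
    rw [this, ← Measure.map_apply measurable_snd measurableSet_closedBall.compl, hπ2]
    exact hνr
  have hm₂ : π A₂ᶜ < 4⁻¹ := by
    have h1 : A₂ᶜ = Prod.fst ⁻¹' ((fun u : X => g⁻¹ • u) ⁻¹' (Metric.closedBall x₀ r))ᶜ := rfl
    rw [h1, ← Measure.map_apply measurable_fst ((hginv measurableSet_closedBall).compl), hπ1,
      Measure.map_apply hgmeas ((hginv measurableSet_closedBall).compl)]
    have h2 : ((fun x : X => g • x) ⁻¹' ((fun u : X => g⁻¹ • u) ⁻¹' (Metric.closedBall x₀ r))ᶜ)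
        = (Metric.closedBall x₀ r)ᶜ := by
      ext x; simp [inv_smul_smul]
    rw [h2]
    exact hμr
  have hm₃ : π A₃ᶜ < 4⁻¹ := by
    by_contra hcon
    push_neg at hcon
    have hmkv := mul_meas_ge_le_lintegral₀ (μ := π)
      (measurable_ecost (p := p) (X := X)).aemeasurable a
    have hsub : A₃ᶜ ⊆ {z : X × X | a ≤ edist z.1 z.2 ^ p} := by
      intro z hz
      simpa [hA₃, not_lt] using hz
    have hge : B ≤ a * π A₃ᶜ := by
      calc B = a * 4⁻¹ := by
            rw [ha, mul_comm (4 : ℝ≥0∞) B, mul_assoc, ENNReal.mul_inv_cancel (by norm_num)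
              (by norm_num), mul_one]
        _ ≤ a * π A₃ᶜ := by gcongr
    have : B ≤ ∫⁻ z : X × X, edist z.1 z.2 ^ p ∂π :=
      hge.trans ((mul_le_mul_right (measure_mono hsub) a).trans hmkv)
    exact absurd (this.trans_lt hπc) (lt_irrefl _)
  -- the intersection is nonempty
  have hnonempty : (A₁ ∩ A₂ ∩ A₃).Nonempty := by
    by_contra hcon
    rw [Set.not_nonempty_iff_eq_empty] at hcon
    have huniv : (Set.univ : Set (X × X)) ⊆ A₁ᶜ ∪ A₂ᶜ ∪ A₃ᶜ := by
      intro z _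
      by_contra hz
      simp only [Set.mem_union, not_or, Set.mem_compl_iff, not_not] at hz
      have : z ∈ A₁ ∩ A₂ ∩ A₃ := ⟨⟨hz.1.1, hz.1.2⟩, hz.2⟩
      rw [hcon] at this
      exact this
    have h1 : (1 : ℝ≥0∞) ≤ π (A₁ᶜ ∪ A₂ᶜ ∪ A₃ᶜ) := by
      rw [← measure_univ (μ := π)]
      exact measure_mono huniv
    have h2 : π (A₁ᶜ ∪ A₂ᶜ ∪ A₃ᶜ) ≤ π A₁ᶜ + π A₂ᶜ + π A₃ᶜ :=
      le_trans (measure_union_le _ _) (add_le_add_left (measure_union_le _ _) _)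
    have h3 : π A₁ᶜ + π A₂ᶜ + π A₃ᶜ ≤ 4⁻¹ + 4⁻¹ + 4⁻¹ :=
      add_le_add (add_le_add hm₁.le hm₂.le) hm₃.le
    have h4 : (1 : ℝ≥0∞) ≤ 4⁻¹ + 4⁻¹ + 4⁻¹ := le_trans h1 (le_trans h2 h3)
    have h5 : (4 : ℝ≥0∞) * 1 ≤ 4 * (4⁻¹ + 4⁻¹ + 4⁻¹) := mul_le_mul_right h4 4
    rw [mul_one, mul_add, mul_add, ENNReal.mul_inv_cancel (by norm_num) (by norm_num)] at h5
    norm_num at h5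
  obtain ⟨z, ⟨hz₁, hz₂⟩, hz₃⟩ := hnonempty
  -- produce the witness
  have hzdist : dist z.1 z.2 ≤ Rr := by
    have hlt : edist z.1 z.2 ^ p < a := hz₃
    rw [← hRrp] at hlt
    have : edist z.1 z.2 ≤ ENNReal.ofReal Rr := by
      by_contra hcc
      push_neg at hcc
      have := ENNReal.rpow_le_rpow hcc.le (hp0 hp).le
      rw [ENNReal.ofReal_rpow_of_nonneg hRr0 (hp0 hp).le] at this
      exact absurd (lt_of_le_of_lt this hlt) (lt_irrefl _)
    exact (edist_le_ofReal hRr0).1 this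
  have hz2ball : z.2 ∈ Metric.closedBall x₀ r := hz₁
  have hz1ball : z.1 ∈ Metric.closedBall x₀ (Rr + r) := by
    rw [Metric.mem_closedBall]
    calc dist z.1 x₀ ≤ dist z.1 z.2 + dist z.2 x₀ := dist_triangle _ _ _
      _ ≤ Rr + r := add_le_add hzdist hz2ball
  set x : X := g⁻¹ • z.1 with hx
  have hxball : x ∈ Metric.closedBall x₀ r := hz₂
  have hgx : g • x = z.1 := smul_inv_smul g z.1
  refine ⟨(g, x), ?_, rfl⟩
  simp only [Set.mem_preimage, Set.mem_prod]
  rw [hgx]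
  exact ⟨hz1ball, hxball⟩

lemma dp_attained (hp : 1 ≤ p) (hiso : ∀ g : G, Isometry (fun x : X => g • x))
    (hproper : IsProperMap (fun q : G × X => (q.1 • q.2, q.2)))
    (μ ν : Measure X) [IsProbabilityMeasure μ] [IsProbabilityMeasure ν]
    (hμm : HasFinitePMoment p μ) (hνm : HasFinitePMoment p ν) :
    ∃ g₀ : G, Wp p (μ.map (fun x : X => g₀ • x)) ν = DpAct G p μ ν := by
  set f : G → ℝ≥0∞ := fun g => Wp p (μ.map (fun x : X => g • x)) ν with hf
  set D : ℝ≥0∞ := DpAct G p μ ν with hD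
  have hDtop : D ≠ ⊤ :=
    ne_top_of_le_ne_top (wp_ne_top hp hμm hνm) (dp_le_wp hiso hp μ ν)
  obtain ⟨K, hKcomp, hKsub⟩ := compact_containment hp hiso hproper μ ν
    (c := D + 1) (by simp [hDtop])
  set V : ℕ → Set G := fun n => {g : G | f g ≤ D + ((n : ℝ≥0∞))⁻¹} with hV
  have hVclosed : ∀ n, IsClosed (V n) := fun n => sublevel_closed hp hiso μ ν hμm _
  have hVmono : ∀ n, V (n + 1) ⊆ V n := by
    intro n g hg
    refine le_trans hg (add_le_add_right ?_ D)
    exact ENNReal.inv_le_inv.2 (by exact_mod_cast Nat.le_succ n)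
  have hVsub : ∀ n, 1 ≤ n → V n ⊆ K := by
    intro n hn g hg
    refine hKsub (le_trans hg (add_le_add_right ?_ D))
    calc ((n : ℝ≥0∞))⁻¹ ≤ ((1 : ℕ) : ℝ≥0∞)⁻¹ :=
          ENNReal.inv_le_inv.2 (by exact_mod_cast hn)
      _ = 1 := by simp
  have hVne : ∀ n : ℕ, ∃ g : G, g ∈ V n ∧ g ∈ K := by
    intro n
    set δ : ℝ≥0∞ := min ((n : ℝ≥0∞))⁻¹ 1 with hδ
    have hδ0 : δ ≠ 0 := by
      simp only [hδ, ne_eq, min_eq_iff, not_or]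
      simp [ENNReal.inv_ne_zero, ENNReal.natCast_ne_top]
    have hlt : D < D + δ := ENNReal.lt_add_right hDtop hδ0
    rw [hD, DpAct] at hlt
    obtain ⟨g, hg⟩ := iInf_lt_iff.mp hlt
    have hg1 : f g ≤ D + ((n : ℝ≥0∞))⁻¹ := le_trans hg.le
      (add_le_add_right (min_le_left _ _) D)
    have hg2 : f g ≤ D + 1 := le_trans hg.le (add_le_add_right (min_le_right _ _) D)
    exact ⟨g, hg1, hKsub hg2⟩
  haveI : CompactSpace K := isCompact_iff_compactSpace.mp hKcomp
  set t : ℕ → Set K := fun n => Subtype.val ⁻¹' (V n) with ht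
  have htclosed : ∀ n, IsClosed (t n) := fun n => (hVclosed n).preimage continuous_subtype_val
  have htcomp : IsCompact (t 0) := (htclosed 0).isCompact
  have htmono : ∀ n, t (n + 1) ⊆ t n := fun n x hx => hVmono n hx
  have htne : ∀ n, (t n).Nonempty := by
    intro n
    obtain ⟨g, hg1, hg2⟩ := hVne n
    exact ⟨⟨g, hg2⟩, hg1⟩
  obtain ⟨⟨g₀, hg₀K⟩, hg₀⟩ := IsCompact.nonempty_iInter_of_sequence_nonempty_isCompact_isClosed
    t htmono htne htcomp htclosed
  have hg₀all : ∀ n : ℕ, f g₀ ≤ D + ((n : ℝ≥0∞))⁻¹ := by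
    intro n
    have := Set.mem_iInter.mp hg₀ n
    exact this
  have hle : f g₀ ≤ D := by
    refine ENNReal.le_of_forall_pos_le_add fun ε hε _ => ?_
    obtain ⟨n, hn⟩ := ENNReal.exists_inv_nat_lt (a := (ε : ℝ≥0∞))
      (by exact_mod_cast hε.ne')
    exact le_trans (hg₀all n) (add_le_add_right hn.le D)
  exact ⟨g₀, le_antisymm hle (iInf_le _ g₀)⟩
end Att

/-- Let `X` be a proper Polish metric space and `G` a topological group acting
continuously, properly and by isometries on `X`. If the `p`-th Wasserstein space over `X`
is geodesic, then the shape space is geodesic: for `μ, ν ∈ P_p(X)` with `D_p(μ,ν) ≠ 0`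
there is a curve `(μ_t)` in `P_p(X)` with `μ_0 = μ`, `μ_1` equivalent to `ν`, and
`D_p(μ_s,μ_t) = |s − t| · D_p(μ,ν)`. -/
theorem shape_space_geodesic {X : Type*} [MetricSpace X] [CompleteSpace X]
    [TopologicalSpace.SeparableSpace X] [ProperSpace X] [MeasurableSpace X] [BorelSpace X]
    (G : Type*) [Group G] [TopologicalSpace G] [IsTopologicalGroup G]
    [MulAction G X] [ContinuousSMul G X]
    (hiso : ∀ g : G, Isometry (fun x : X => g • x))
    (hproper : IsProperMap (fun q : G × X => (q.1 • q.2, q.2)))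
    (p : ℝ) (hp : 1 ≤ p)
    (hgeodesic : ∀ μ ν : Measure X,
      IsProbabilityMeasure μ → HasFinitePMoment p μ →
      IsProbabilityMeasure ν → HasFinitePMoment p ν →
      Wp p μ ν ≠ 0 →
      ∃ γ : ℝ → Measure X, γ 0 = μ ∧ γ 1 = ν ∧
        (∀ t ∈ Icc (0:ℝ) 1, IsProbabilityMeasure (γ t) ∧ HasFinitePMoment p (γ t)) ∧
        ∀ s ∈ Icc (0:ℝ) 1, ∀ t ∈ Icc (0:ℝ) 1,
          Wp p (γ s) (γ t) = ENNReal.ofReal |s - t| * Wp p μ ν) :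
    ∀ μ ν : Measure X,
      IsProbabilityMeasure μ → HasFinitePMoment p μ →
      IsProbabilityMeasure ν → HasFinitePMoment p ν →
      DpAct G p μ ν ≠ 0 →
      ∃ γ : ℝ → Measure X, γ 0 = μ ∧ (∃ g : G, (γ 1).map (fun x : X => g • x) = ν) ∧
        (∀ t ∈ Icc (0:ℝ) 1, IsProbabilityMeasure (γ t) ∧ HasFinitePMoment p (γ t)) ∧
        ∀ s ∈ Icc (0:ℝ) 1, ∀ t ∈ Icc (0:ℝ) 1,
          DpAct G p (γ s) (γ t) = ENNReal.ofReal |s - t| * DpAct G p μ ν := by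
  haveI : SecondCountableTopology X := UniformSpace.secondCountable_of_separable X
  intro μ ν hμP hμm hνP hνm hD0
  haveI := hμP
  haveI := hνP
  -- the infimum over `G` is attained at some `g₀`
  obtain ⟨g₀, hg₀⟩ := dp_attained hp hiso hproper μ ν hμm hνm
  set ν' : Measure X := ν.map (fun x : X => g₀⁻¹ • x) with hν'def
  haveI : IsProbabilityMeasure ν' :=
    Measure.isProbabilityMeasure_map (hiso g₀⁻¹).continuous.measurable.aemeasurable
  have hν'm : HasFinitePMoment p ν' :=
    moment_map (hiso g₀⁻¹).continuous.measurable (fun x y => (hiso g₀⁻¹).edist_eq x y) hνm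
  set D : ℝ≥0∞ := DpAct G p μ ν with hDdef
  have hWμν' : Wp p μ ν' = D := by
    rw [← dp_eq_wp_smul hiso hp μ ν g₀]
    exact hg₀
  have hDne : Wp p μ ν' ≠ 0 := by rw [hWμν']; exact hD0
  have hDtop : D ≠ ⊤ :=
    ne_top_of_le_ne_top (wp_ne_top hp hμm hνm) (dp_le_wp hiso hp μ ν)
  obtain ⟨γ, hγ0, hγ1, hγreg, hγgeo⟩ := hgeodesic μ ν' hμP hμm ‹_› hν'm hDne
  refine ⟨γ, hγ0, ⟨g₀, ?_⟩, hγreg, ?_⟩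
  · rw [hγ1, hν'def, map_smul_smul hiso ν g₀⁻¹ g₀, mul_inv_cancel, map_one_smul]
  -- the distance identity
  have key : ∀ s ∈ Icc (0:ℝ) 1, ∀ t ∈ Icc (0:ℝ) 1, s ≤ t →
      DpAct G p (γ s) (γ t) = ENNReal.ofReal |s - t| * D := by
    intro s hs t ht hst
    haveI := (hγreg s hs).1
    haveI := (hγreg t ht).1
    have habs : |s - t| = t - s := by rw [abs_sub_comm, abs_of_nonneg (by linarith)]
    -- upper bound
    have hupper : DpAct G p (γ s) (γ t) ≤ ENNReal.ofReal |s - t| * D := by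
      refine le_trans (dp_le_wp hiso hp (γ s) (γ t)) ?_
      rw [hγgeo s hs t ht, hWμν']
    -- lower bound
    have h2 : DpAct G p μ (γ s) ≤ ENNReal.ofReal s * D := by
      refine le_trans (dp_le_wp hiso hp μ (γ s)) ?_
      have : Wp p μ (γ s) = Wp p (γ 0) (γ s) := by rw [hγ0]
      rw [this, hγgeo 0 ⟨le_rfl, zero_le_one⟩ s hs, hWμν', zero_sub, abs_neg,
        abs_of_nonneg hs.1]
    have h3 : DpAct G p (γ t) ν ≤ ENNReal.ofReal (1 - t) * D := by
      refine le_trans (iInf_le (fun h : G => Wp p ((γ t).map (fun x : X => h • x)) ν) g₀) ?_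
      rw [dp_eq_wp_smul hiso hp (γ t) ν g₀, ← hν'def, ← hγ1, hγgeo t ht 1 ⟨zero_le_one, le_rfl⟩,
        hWμν', abs_of_nonpos (sub_nonpos.mpr ht.2), neg_sub]
    have htri : D ≤ DpAct G p μ (γ s) + (DpAct G p (γ s) (γ t) + DpAct G p (γ t) ν) :=
      le_trans (dp_triangle hiso hp μ (γ s) ν)
        (add_le_add_right (dp_triangle hiso hp (γ s) (γ t) ν) _)
    set x : ℝ≥0∞ := DpAct G p (γ s) (γ t) with hx
    set c : ℝ≥0∞ := ENNReal.ofReal s * D + ENNReal.ofReal (1 - t) * D with hc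
    have hcne : c ≠ ⊤ := by
      rw [hc]
      exact ENNReal.add_ne_top.2 ⟨ENNReal.mul_ne_top ENNReal.ofReal_ne_top hDtop,
        ENNReal.mul_ne_top ENNReal.ofReal_ne_top hDtop⟩
    have h4 : D ≤ x + c := by
      calc D ≤ ENNReal.ofReal s * D + (x + ENNReal.ofReal (1 - t) * D) :=
            le_trans htri (add_le_add h2 (add_le_add le_rfl h3))
        _ = x + c := by rw [hc]; ring
    have hsum : ENNReal.ofReal (t - s) * D + c = D := by
      rw [hc, ← add_assoc, ← add_mul, ← add_mul,
        ← ENNReal.ofReal_add (sub_nonneg.mpr hst) hs.1,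
        ← ENNReal.ofReal_add (by linarith [ht.1]) (sub_nonneg.mpr ht.2)]
      norm_num
    have hlower : ENNReal.ofReal (t - s) * D ≤ x := by
      have h5 : ENNReal.ofReal (t - s) * D + c ≤ x + c := by rw [hsum]; exact h4
      exact (ENNReal.add_le_add_iff_right hcne).1 h5
    rw [habs]
    exact le_antisymm (habs ▸ hupper) hlower
  intro s hs t ht
  rcases le_total s t with hst | hst
  · exact key s hs t ht hst
  · rw [dp_symm hiso hp (γ s) (γ t), abs_sub_comm]
    exact key t ht s hs hst

end
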